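/- Define a sequence f_b in the field Q(t,q) for b ∈ Z by the initial conditions f_{-1} = f_0 = 1, f_1 = 1 + (q^{-1} + q^{-3}) u + q^2 u^2 where u = t + t^{-1} - q - q^{-1}, and the recursion q^4 t^2 f_{b+3} = (q^2 + q^4 t^2 + q^2 t^4) f_{b+2} - (q^2 + t^2 + q^2 t^4) f_{b+1} + t^2 f_b for all b ∈ Z. Then for every integer b ≥ 1, f_b is a Laurent polynomial in t and q whose highest t-power is t^{2b} and whose lowest t-power is t^{-2b}; in particular its t-degree equals 4b. -/

import Mathlib

open LaurentPolynomial

set_option synthInstance.maxHeartbeats 1000000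
set_option maxHeartbeats 2000000

noncomputable section

instance : IsDomain (LaurentPolynomial (LaurentPolynomial ℚ)) :=
  NoZeroDivisors.to_isDomain _

/-- The field `ℚ(t,q)`, realized as the fraction field of the Laurent polynomial
ring `ℚ[t^±1][q^±1]` (with `t` the outer variable and `q` the inner one). -/
abbrev F : Type := FractionRing (LaurentPolynomial (LaurentPolynomial ℚ))

/-- The variable `t` of `ℚ(t,q)`. -/
def t : F := algebraMap (LaurentPolynomial (LaurentPolynomial ℚ)) F (T 1)

/-- The variable `q` of `ℚ(t,q)`. -/
def q : F := algebraMap (LaurentPolynomial (LaurentPolynomial ℚ)) F (LaurentPolynomial.C (T 1))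

namespace V1Aux

abbrev K : Type := LaurentPolynomial ℚ
abbrev S : Type := LaurentPolynomial K

/-- single as an element of `S`. -/
def sg (m : ℤ) (a : K) : S := AddMonoidAlgebra.single m a

lemma sg_eq (m : ℤ) (a : K) : sg m a = LaurentPolynomial.C a * T m :=
  single_eq_C_mul_T a m

lemma sg_mul_apply (m : ℤ) (a : K) (p : S) (k : ℤ) :
    (sg m a * p).coeff k = a * p.coeff (k - m) := by
  rw [sg, AddMonoidAlgebra.coeff_single_mul_apply, neg_add_eq_sub]

lemma sg_apply (m : ℤ) (a : K) (k : ℤ) : (sg m a).coeff k = if m = k then a else 0 :=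
  Finsupp.single_apply

lemma add_apply' (p r : S) (k : ℤ) : (p + r).coeff k = p.coeff k + r.coeff k := Finsupp.add_apply _ _ _

lemma sub_apply' (p r : S) (k : ℤ) : (p - r).coeff k = p.coeff k - r.coeff k := Finsupp.sub_apply _ _ _

def aco : K := T (-3) + T (-1) - (T 1 + T 1) - (T 3 + T 3)

def cco : K := 1 + (T 2 + T 2 + T 2 + T 2) + T 4 - (T (-2) + T (-2)) - T (-4)

def g2 : S := sg (-2) (T 2) + sg (-1) aco + sg 0 cco + sg 1 aco + sg 2 (T 2)

def GA : S := sg 0 (T 2) + sg 2 (T 4) + sg 4 (T 2)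
def GB : S := sg 0 (T 2) + sg 2 1 + sg 4 (T 2)

def G : ℕ → S
  | 0 => 1
  | 1 => 1
  | 2 => g2
  | (n+3) => sg (-2) (T (-4)) * (GA * G (n+2) - GB * G (n+1) + sg 2 1 * G n)

lemma coeffG3 (n : ℕ) (k : ℤ) :
    (G (n+3)).coeff k = T (-4) *
      (T 2 * (G (n+2)).coeff (k + 2) + T 4 * (G (n+2)).coeff k + T 2 * (G (n+2)).coeff (k - 2)
        - (T 2 * (G (n+1)).coeff (k + 2) + (G (n+1)).coeff k + T 2 * (G (n+1)).coeff (k - 2))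
        + (G n).coeff k) := by
  show (sg (-2) (T (-4)) * (GA * G (n+2) - GB * G (n+1) + sg 2 1 * G n)).coeff k = _
  rw [sg_mul_apply]
  simp only [GA, GB, add_mul, sub_mul, one_mul, add_apply', sub_apply', sg_mul_apply]
  ring_nf

lemma one_apply (k : ℤ) : (1 : S).coeff k = if (0:ℤ) = k then 1 else 0 := by
  rw [show (1 : S) = sg 0 1 from rfl, sg_apply]

lemma G_bound : ∀ n : ℕ,
    (∀ k : ℤ, (max 0 (2*(n:ℤ) - 2) < k ∨ k < -(max 0 (2*(n:ℤ) - 2))) → (G n).coeff k = 0) ∧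
    (2 ≤ n → ∀ k : ℤ, (k = 2*(n:ℤ) - 2 ∨ k = -(2*(n:ℤ) - 2)) →
      (G n).coeff k = T (6 - 2*(n:ℤ))) := by
  intro n
  induction n using Nat.strong_induction_on with
  | _ n ih =>
    match n with
    | 0 =>
      refine ⟨fun k hk => ?_, fun h => absurd h (by omega)⟩
      rw [show G 0 = 1 from rfl, one_apply, if_neg (by omega)]
    | 1 =>
      refine ⟨fun k hk => ?_, fun h => absurd h (by omega)⟩
      rw [show G 1 = 1 from rfl, one_apply, if_neg (by omega)]
    | 2 =>
      constructor
      · intro k hk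
        rw [show G 2 = g2 from rfl]
        simp only [g2, add_apply', sg_apply]
        rw [if_neg (by omega), if_neg (by omega), if_neg (by omega), if_neg (by omega),
          if_neg (by omega)]
        ring
      · intro _ k hk
        rw [show G 2 = g2 from rfl]
        simp only [g2, add_apply', sg_apply]
        rcases hk with hk | hk
        · rw [if_neg (by omega), if_neg (by omega), if_neg (by omega), if_neg (by omega),
            if_pos (by omega)]
          simp only [zero_add, add_zero]
          norm_num
        · rw [if_pos (by omega), if_neg (by omega), if_neg (by omega), if_neg (by omega),
            if_neg (by omega)]
          simp only [zero_add, add_zero]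
          norm_num
    | (m+3) =>
      have h0 := ih m (by omega)
      have h1 := ih (m+1) (by omega)
      have h2 := ih (m+2) (by omega)
      constructor
      · intro k hk
        rw [coeffG3, h2.1 (k+2) (by omega), h2.1 k (by omega), h2.1 (k-2) (by omega),
          h1.1 (k+2) (by omega), h1.1 k (by omega), h1.1 (k-2) (by omega),
          h0.1 k (by omega)]
        ring
      · intro _ k hk
        rcases hk with hk | hk
        · rw [coeffG3, h2.1 (k+2) (by omega), h2.1 k (by omega),
            h2.2 (by omega) (k-2) (by omega),
            h1.1 (k+2) (by omega), h1.1 k (by omega), h1.1 (k-2) (by omega),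
            h0.1 k (by omega)]
          simp only [mul_zero, add_zero, zero_add, sub_zero]
          rw [← T_add, ← T_add]
          congr 1
          omega
        · rw [coeffG3, h2.2 (by omega) (k+2) (by omega), h2.1 k (by omega),
            h2.1 (k-2) (by omega),
            h1.1 (k+2) (by omega), h1.1 k (by omega), h1.1 (k-2) (by omega),
            h0.1 k (by omega)]
          simp only [mul_zero, add_zero, zero_add, sub_zero]
          rw [← T_add, ← T_add]
          congr 1
          omega

lemma T_ne_zero' (e : ℤ) : (T e : K) ≠ 0 := by
  intro h
  have h2 : (T e : K).coeff e = 0 := by rw [h]; rfl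
  simp at h2

lemma t_ne : t ≠ 0 := by
  intro h
  have h2 : (T 1 : S) = 0 := IsFractionRing.injective S F (by simpa [t] using h)
  have h3 : (T 1 : S).coeff 1 = 0 := by rw [h2]; rfl
  simp at h3

lemma q_ne : q ≠ 0 := by
  intro h
  have h2 : (LaurentPolynomial.C (T 1) : S) = 0 :=
    IsFractionRing.injective S F (by simpa [q] using h)
  have h3 : (LaurentPolynomial.C (T 1) : S).coeff 0 = 0 := by rw [h2]; rfl
  rw [C_apply] at h3
  simp at h3
  exact T_ne_zero' 1 h3

lemma map_T_pow (n : ℕ) : algebraMap S F (T (n:ℤ)) = t ^ n := by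
  rw [t, ← map_pow, T_pow, mul_one]

lemma map_T_neg (n : ℕ) : algebraMap S F (T (-(n:ℤ))) = (t ^ n)⁻¹ := by
  refine (inv_eq_of_mul_eq_one_left ?_).symm
  rw [← map_T_pow, ← map_mul, ← T_add]
  simp

lemma map_C_pow (n : ℕ) : algebraMap S F (LaurentPolynomial.C (T (n:ℤ))) = q ^ n := by
  rw [q, ← map_pow, ← map_pow, T_pow, mul_one]

lemma map_C_neg (n : ℕ) : algebraMap S F (LaurentPolynomial.C (T (-(n:ℤ)))) = (q ^ n)⁻¹ := by
  refine (inv_eq_of_mul_eq_one_left ?_).symm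
  rw [← map_C_pow, ← map_mul, ← map_mul, ← T_add]
  simp

lemma mapG (f : ℤ → F)
    (hm1 : f (-1) = 1) (h0 : f 0 = 1)
    (h1 : f 1 = 1 + (q ^ (-1 : ℤ) + q ^ (-3 : ℤ)) * (t + t⁻¹ - q - q⁻¹)
        + q ^ 2 * (t + t⁻¹ - q - q⁻¹) ^ 2)
    (hrec : ∀ b : ℤ, q ^ 4 * t ^ 2 * f (b + 3) =
        (q ^ 2 + q ^ 4 * t ^ 2 + q ^ 2 * t ^ 4) * f (b + 2)
          - (q ^ 2 + t ^ 2 + q ^ 2 * t ^ 4) * f (b + 1) + t ^ 2 * f b) :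
    ∀ n : ℕ, algebraMap S F (G n) = f ((n : ℤ) - 1) := by
  intro n
  induction n using Nat.strong_induction_on with
  | _ n ih =>
    match n with
    | 0 => simpa [G, hm1] using (map_one (algebraMap S F))
    | 1 => simpa [G, h0] using (map_one (algebraMap S F))
    | 2 =>
      show algebraMap S F g2 = f 1
      rw [h1]
      have e1 : algebraMap S F (T (1:ℤ)) = t := rfl
      have e2 : algebraMap S F (T (2:ℤ)) = t ^ 2 := by simpa using map_T_pow 2
      have em1 : algebraMap S F (T (-1:ℤ)) = (t ^ 1)⁻¹ := by simpa using map_T_neg 1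
      have em2 : algebraMap S F (T (-2:ℤ)) = (t ^ 2)⁻¹ := by simpa using map_T_neg 2
      have c1 : algebraMap S F (LaurentPolynomial.C (T (1:ℤ))) = q := rfl
      have c2 : algebraMap S F (LaurentPolynomial.C (T (2:ℤ))) = q ^ 2 := by
        simpa using map_C_pow 2
      have c3 : algebraMap S F (LaurentPolynomial.C (T (3:ℤ))) = q ^ 3 := by
        simpa using map_C_pow 3
      have c4 : algebraMap S F (LaurentPolynomial.C (T (4:ℤ))) = q ^ 4 := by
        simpa using map_C_pow 4
      have cm1 : algebraMap S F (LaurentPolynomial.C (T (-1:ℤ))) = (q ^ 1)⁻¹ := by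
        simpa using map_C_neg 1
      have cm2 : algebraMap S F (LaurentPolynomial.C (T (-2:ℤ))) = (q ^ 2)⁻¹ := by
        simpa using map_C_neg 2
      have cm3 : algebraMap S F (LaurentPolynomial.C (T (-3:ℤ))) = (q ^ 3)⁻¹ := by
        simpa using map_C_neg 3
      have cm4 : algebraMap S F (LaurentPolynomial.C (T (-4:ℤ))) = (q ^ 4)⁻¹ := by
        simpa using map_C_neg 4
      have hz1 : q ^ (-1 : ℤ) = q⁻¹ := by
        rw [zpow_neg, zpow_one]
      have hz3 : q ^ (-3 : ℤ) = (q ^ 3)⁻¹ := by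
        rw [show (-3:ℤ) = -((3:ℕ):ℤ) by norm_num, zpow_neg, zpow_natCast]
      simp only [g2, aco, cco, sg_eq, map_add, map_sub, map_mul, map_one, T_zero, mul_one,
        e1, e2, em1, em2, c1, c2, c3, c4, cm1, cm2, cm3, cm4, hz1, hz3]
      have key : ∀ x y : F, x * (q^4 * t^2) = y * (q^4 * t^2) → x = y := fun x y h =>
        mul_right_cancel₀ (mul_ne_zero (pow_ne_zero _ q_ne) (pow_ne_zero _ t_ne)) h
      apply key
      have eq1 : q⁻¹ * q = 1 := inv_mul_cancel₀ q_ne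
      have eq2 : t⁻¹ * t = 1 := inv_mul_cancel₀ t_ne
      simp only [inv_pow, pow_one]
      linear_combination (q^4*q⁻¹^2*t^2 + 2*q^5*t^2*t⁻¹ + 2*q^5*t^3 - q^5*q⁻¹*t^2
        - 2*q^6*t^2) * eq1 + (-2*q^6*t^2) * eq2
    | (m+3) =>
      have i0 := ih m (by omega)
      have i1 := ih (m+1) (by omega)
      have i2 := ih (m+2) (by omega)
      have e2 : algebraMap S F (T (2:ℤ)) = t ^ 2 := by simpa using map_T_pow 2
      have e4 : algebraMap S F (T (4:ℤ)) = t ^ 4 := by simpa using map_T_pow 4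
      have c2 : algebraMap S F (LaurentPolynomial.C (T (2:ℤ))) = q ^ 2 := by
        simpa using map_C_pow 2
      have c4 : algebraMap S F (LaurentPolynomial.C (T (4:ℤ))) = q ^ 4 := by
        simpa using map_C_pow 4
      have hGA : algebraMap S F GA = q ^ 2 + q ^ 4 * t ^ 2 + q ^ 2 * t ^ 4 := by
        simp only [GA, sg_eq, map_add, map_mul, e2, e4, c2, c4, T_zero, map_one, mul_one]
      have hGB : algebraMap S F GB = q ^ 2 + t ^ 2 + q ^ 2 * t ^ 4 := by
        simp only [GB, sg_eq, map_add, map_mul, map_one, one_mul, e2, e4, c2, c4, T_zero,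
          mul_one]
      have hsg2 : algebraMap S F (sg 2 1) = t ^ 2 := by
        simp only [sg_eq, map_mul, map_one, one_mul, e2]
      have hu : q ^ 4 * t ^ 2 * algebraMap S F (sg (-2) (T (-4))) = 1 := by
        have u1 : algebraMap S F (LaurentPolynomial.C (T (-4:ℤ))) = (q ^ 4)⁻¹ := by
          simpa using map_C_neg 4
        have u2 : algebraMap S F (T (-2:ℤ)) = (t ^ 2)⁻¹ := by
          simpa using map_T_neg 2
        rw [sg_eq, map_mul, u1, u2]
        field_simp [t_ne, q_ne]
      have key := hrec ((m:ℤ) - 1)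
      rw [show (m:ℤ) - 1 + 3 = ((m+3:ℕ):ℤ) - 1 by push_cast; ring,
        show (m:ℤ) - 1 + 2 = ((m+2:ℕ):ℤ) - 1 by push_cast; ring,
        show (m:ℤ) - 1 + 1 = ((m+1:ℕ):ℤ) - 1 by push_cast; ring] at key
      refine mul_left_cancel₀ (a := q ^ 4 * t ^ 2)
        (mul_ne_zero (pow_ne_zero 4 q_ne) (pow_ne_zero 2 t_ne)) ?_
      calc q ^ 4 * t ^ 2 * algebraMap S F (G (m+3))
          = (q ^ 4 * t ^ 2 * algebraMap S F (sg (-2) (T (-4)))) *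
            algebraMap S F (GA * G (m+2) - GB * G (m+1) + sg 2 1 * G m) := by
            rw [show G (m+3) = sg (-2) (T (-4)) *
              (GA * G (m+2) - GB * G (m+1) + sg 2 1 * G m) from rfl, map_mul]
            ring
        _ = algebraMap S F (GA * G (m+2) - GB * G (m+1) + sg 2 1 * G m) := by
            rw [hu, one_mul]
        _ = q ^ 4 * t ^ 2 * f (((m+3:ℕ):ℤ) - 1) := by
            rw [map_add, map_sub, map_mul, map_mul, map_mul, hGA, hGB, hsg2, i2, i1, i0, key]

end V1Aux

/-- Let `f : ℤ → ℚ(t,q)` satisfy `f (-1) = f 0 = 1`,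
`f 1 = 1 + (q⁻¹ + q⁻³) u + q² u²` where `u = t + t⁻¹ - q - q⁻¹`, and the recursion
`q⁴ t² f (b+3) = (q² + q⁴ t² + q² t⁴) f (b+2) - (q² + t² + q² t⁴) f (b+1) + t² f b`
for all `b : ℤ`.  Then for every `b ≥ 1`, `f b` is a Laurent polynomial in `t` and `q`
whose highest `t`-power is `t^(2b)` and whose lowest `t`-power is `t^(-2b)`; in
particular its `t`-degree is `4b`. -/
theorem V1_torus_t_degree (f : ℤ → F)
    (hm1 : f (-1) = 1) (h0 : f 0 = 1)
    (h1 : f 1 = 1 + (q ^ (-1 : ℤ) + q ^ (-3 : ℤ)) * (t + t⁻¹ - q - q⁻¹)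
        + q ^ 2 * (t + t⁻¹ - q - q⁻¹) ^ 2)
    (hrec : ∀ b : ℤ, q ^ 4 * t ^ 2 * f (b + 3) =
        (q ^ 2 + q ^ 4 * t ^ 2 + q ^ 2 * t ^ 4) * f (b + 2)
          - (q ^ 2 + t ^ 2 + q ^ 2 * t ^ 4) * f (b + 1) + t ^ 2 * f b) :
    ∀ b : ℤ, 1 ≤ b →
      ∃ g : LaurentPolynomial (LaurentPolynomial ℚ),
        algebraMap (LaurentPolynomial (LaurentPolynomial ℚ)) F g = f b ∧
        g.coeff (2 * b) ≠ 0 ∧ g.coeff (-(2 * b)) ≠ 0 ∧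
        ∀ n : ℤ, (2 * b < n ∨ n < -(2 * b)) → g.coeff n = 0 := by
  intro b hb
  refine ⟨V1Aux.G (b.toNat + 1), ?_, ?_, ?_, ?_⟩
  · rw [V1Aux.mapG f hm1 h0 h1 hrec (b.toNat + 1)]
    congr 1
    omega
  · rw [(V1Aux.G_bound (b.toNat + 1)).2 (by omega) (2*b) (by omega)]
    exact V1Aux.T_ne_zero' _
  · rw [(V1Aux.G_bound (b.toNat + 1)).2 (by omega) (-(2*b)) (by omega)]
    exact V1Aux.T_ne_zero' _
  · intro n hn
    exact (V1Aux.G_bound (b.toNat + 1)).1 n (by omega)
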